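/- For every i ∈ I, the pair (c, y) = (a_i/‖a_i‖_1, e_i/‖a_i‖_1), together with ε_q = (a_iᵀ x̂_q − b_i)/‖a_i‖_1 for all q, is a feasible solution of GIO_A(X̂) with objective value Σ_{q=1}^Q |a_iᵀ x̂_q − b_i| / ‖a_i‖_1. Consequently, z_A*(X̂) ≤ D_A(X̂) and 0 ≤ ρ_A(X̂) ≤ 1. -/

import Mathlib

open Matrix

/-- Feasibility for the absolute duality gap inverse problem `GIO_A(X̂)`,
with normalization norm `‖·‖₁`. -/
def FeasA {m n Q : ℕ} (A : Matrix (Fin m) (Fin n) ℝ) (b : Fin m → ℝ)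
    (xhat : Fin Q → Fin n → ℝ)
    (c : Fin n → ℝ) (y : Fin m → ℝ) (ε : Fin Q → ℝ) : Prop :=
  Aᵀ.mulVec y = c ∧ (∀ i, 0 ≤ y i) ∧ (∀ q, c ⬝ᵥ xhat q = b ⬝ᵥ y + ε q) ∧
    (∑ j, |c j|) = 1

/-- Optimal value of `GIO_A(X̂)`. -/
noncomputable def zA {m n Q : ℕ} (A : Matrix (Fin m) (Fin n) ℝ) (b : Fin m → ℝ)
    (xhat : Fin Q → Fin n → ℝ) : ℝ :=
  sInf {v : ℝ | ∃ (c : Fin n → ℝ) (y : Fin m → ℝ) (ε : Fin Q → ℝ),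
    FeasA A b xhat c y ε ∧ v = ∑ q, |ε q|}

/-- The baseline denominator `D_A(X̂)`. -/
noncomputable def DA {m n Q : ℕ} (A : Matrix (Fin m) (Fin n) ℝ) (b : Fin m → ℝ)
    (xhat : Fin Q → Fin n → ℝ) : ℝ :=
  (m : ℝ)⁻¹ * ∑ i, ∑ q, |A i ⬝ᵥ xhat q - b i| / (∑ j, |A i j|)

theorem stmt_17
    (m n Q : ℕ) (hm : 0 < m) (hn : 0 < n) (hQ : 0 < Q)
    (A : Matrix (Fin m) (Fin n) ℝ) (b : Fin m → ℝ)
    (hrows : ∀ i, A i ≠ 0)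
    (hPint : (interior {x : Fin n → ℝ | ∀ i, b i ≤ A.mulVec x i}).Nonempty)
    -- the data set X̂
    (xhat : Fin Q → Fin n → ℝ)
    -- D_A(X̂) is assumed positive
    (hDA : 0 < DA A b xhat) :
    -- 1. each baseline candidate (a_i/‖a_i‖₁, e_i/‖a_i‖₁) is feasible with
    --    objective value Σ_q |a_iᵀ x̂_q − b_i| / ‖a_i‖₁
    (∀ i : Fin m,
      FeasA A b xhat ((∑ j, |A i j|)⁻¹ • A i)
        ((∑ j, |A i j|)⁻¹ • (Pi.single i 1 : Fin m → ℝ))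
        (fun q => (A i ⬝ᵥ xhat q - b i) / (∑ j, |A i j|)) ∧
      ∑ q, |(A i ⬝ᵥ xhat q - b i) / (∑ j, |A i j|)| =
        ∑ q, |A i ⬝ᵥ xhat q - b i| / (∑ j, |A i j|)) ∧
    -- 2. consequently z_A*(X̂) ≤ D_A(X̂) and 0 ≤ ρ_A(X̂) ≤ 1
    zA A b xhat ≤ DA A b xhat ∧
    0 ≤ 1 - zA A b xhat / DA A b xhat ∧
    1 - zA A b xhat / DA A b xhat ≤ 1 := by
  have hs : ∀ i : Fin m, 0 < ∑ j, |A i j| := by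
    intro i
    apply Finset.sum_pos'
    · intro j _; exact abs_nonneg _
    · obtain ⟨j, hj⟩ := Function.ne_iff.mp (hrows i)
      exact ⟨j, Finset.mem_univ j, abs_pos.mpr hj⟩
  have hfeas : ∀ i : Fin m,
      FeasA A b xhat ((∑ j, |A i j|)⁻¹ • A i)
        ((∑ j, |A i j|)⁻¹ • (Pi.single i 1 : Fin m → ℝ))
        (fun q => (A i ⬝ᵥ xhat q - b i) / (∑ j, |A i j|)) ∧
      ∑ q, |(A i ⬝ᵥ xhat q - b i) / (∑ j, |A i j|)| =
        ∑ q, |A i ⬝ᵥ xhat q - b i| / (∑ j, |A i j|) := by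
    intro i
    have hsi := hs i
    have hsi' : (∑ j, |A i j|) ≠ 0 := ne_of_gt hsi
    constructor
    · refine ⟨?_, ?_, ?_, ?_⟩
      · funext j
        simp [Matrix.mulVec, dotProduct, Pi.single_apply, mul_comm,
          Finset.mul_sum, mul_ite, mul_assoc]
      · intro k
        simp only [Pi.smul_apply, smul_eq_mul]
        apply mul_nonneg (inv_nonneg.mpr hsi.le)
        by_cases hk : k = i <;> simp [Pi.single_apply, hk]
      · intro q
        have h1 : ((∑ j, |A i j|)⁻¹ • A i) ⬝ᵥ xhat q
            = (∑ j, |A i j|)⁻¹ * (A i ⬝ᵥ xhat q) := by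
          simp [dotProduct, Finset.mul_sum, mul_assoc]
        have h2 : b ⬝ᵥ ((∑ j, |A i j|)⁻¹ • (Pi.single i 1 : Fin m → ℝ))
            = (∑ j, |A i j|)⁻¹ * b i := by
          simp [dotProduct, Pi.single_apply, mul_comm]
        rw [h1, h2]
        field_simp
        ring
      · have : ∀ j, |((∑ j, |A i j|)⁻¹ • A i) j| = (∑ j, |A i j|)⁻¹ * |A i j| := by
          intro j
          simp [abs_mul, abs_of_nonneg (inv_nonneg.mpr hsi.le)]
        rw [Finset.sum_congr rfl fun j _ => this j, ← Finset.mul_sum,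
          inv_mul_cancel₀ hsi']
    · refine Finset.sum_congr rfl fun q _ => ?_
      rw [abs_div, abs_of_pos hsi]
  -- the feasible set
  set S : Set ℝ := {v : ℝ | ∃ (c : Fin n → ℝ) (y : Fin m → ℝ) (ε : Fin Q → ℝ),
    FeasA A b xhat c y ε ∧ v = ∑ q, |ε q|} with hS
  have hbdd : BddBelow S := by
    refine ⟨0, fun v hv => ?_⟩
    obtain ⟨c, y, ε, _, rfl⟩ := hv
    exact Finset.sum_nonneg fun q _ => abs_nonneg _
  have hmem : ∀ i : Fin m,
      (∑ q, |A i ⬝ᵥ xhat q - b i| / (∑ j, |A i j|)) ∈ S := by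
    intro i
    exact ⟨_, _, _, (hfeas i).1, ((hfeas i).2).symm⟩
  have hz_le : ∀ i : Fin m,
      zA A b xhat ≤ ∑ q, |A i ⬝ᵥ xhat q - b i| / (∑ j, |A i j|) :=
    fun i => csInf_le hbdd (hmem i)
  have hz_nonneg : 0 ≤ zA A b xhat := by
    have hne : S.Nonempty := ⟨_, hmem ⟨0, hm⟩⟩
    exact le_csInf hne fun v hv => by
      obtain ⟨c, y, ε, _, rfl⟩ := hv
      exact Finset.sum_nonneg fun q _ => abs_nonneg _
  have hzDA : zA A b xhat ≤ DA A b xhat := by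
    have h1 : (m : ℝ) * zA A b xhat ≤
        ∑ i, ∑ q, |A i ⬝ᵥ xhat q - b i| / (∑ j, |A i j|) := by
      calc (m : ℝ) * zA A b xhat = ∑ _i : Fin m, zA A b xhat := by
            simp [Finset.sum_const, mul_comm]
        _ ≤ _ := Finset.sum_le_sum fun i _ => hz_le i
    rw [DA, ← inv_mul_cancel_left₀ (a := (m : ℝ)) (by positivity) (zA A b xhat)]
    exact mul_le_mul_of_nonneg_left h1 (by positivity)
  refine ⟨hfeas, hzDA, ?_, ?_⟩
  · have : zA A b xhat / DA A b xhat ≤ 1 := (div_le_one hDA).mpr hzDA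
    linarith
  · have : 0 ≤ zA A b xhat / DA A b xhat := div_nonneg hz_nonneg hDA.le
    linarith
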